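/- arXiv:1109.3920 — 2 statements merged into one kernel-verified Lean document; each statement's English description precedes it below -/
import Mathlib

section
/- For any bounded domain D in ℂⁿ, the squeezing function s_D : D → (0, 1] is continuous (with respect to the Euclidean topology on D). -/
open Metric

/-- The squeezing function of a bounded domain `D ⊆ ℂⁿ` at a point `p ∈ D`:
the supremum of all `r > 0` such that some injective holomorphic map `f : D → Bⁿ`
with `f p = 0` satisfies `Bⁿ(0, r) ⊆ f '' D`. -/
noncomputable def squeezingFn {n : ℕ} (D : Set (EuclideanSpace ℂ (Fin n)))
    (p : EuclideanSpace ℂ (Fin n)) : ℝ :=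
  sSup { r : ℝ | ∃ f : EuclideanSpace ℂ (Fin n) → EuclideanSpace ℂ (Fin n),
    DifferentiableOn ℂ f D ∧ Set.InjOn f D ∧ f '' D ⊆ ball 0 1 ∧ f p = 0 ∧
    0 < r ∧ ball (0 : EuclideanSpace ℂ (Fin n)) r ⊆ f '' D }

namespace Stmt4Aux

variable {n : ℕ}

/-- The set whose supremum defines the squeezing function. -/
def S (D : Set (EuclideanSpace ℂ (Fin n))) (p : EuclideanSpace ℂ (Fin n)) : Set ℝ :=
  { r : ℝ | ∃ f : EuclideanSpace ℂ (Fin n) → EuclideanSpace ℂ (Fin n),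
    DifferentiableOn ℂ f D ∧ Set.InjOn f D ∧ f '' D ⊆ ball 0 1 ∧ f p = 0 ∧
    0 < r ∧ ball (0 : EuclideanSpace ℂ (Fin n)) r ⊆ f '' D }

lemma squeezingFn_eq (D : Set (EuclideanSpace ℂ (Fin n))) (p : EuclideanSpace ℂ (Fin n)) :
    squeezingFn D p = sSup (S D p) := rfl

lemma S_nonempty {D : Set (EuclideanSpace ℂ (Fin n))} (hDopen : IsOpen D)
    (hDbd : Bornology.IsBounded D) {p : EuclideanSpace ℂ (Fin n)} (hp : p ∈ D) :
    (S D p).Nonempty := by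
  obtain ⟨δ, hδ, hball⟩ := Metric.isOpen_iff.mp hDopen p hp
  obtain ⟨R, hR⟩ := hDbd.subset_closedBall 0
  have hpR : ‖p‖ ≤ R := by simpa using hR hp
  set M : ℝ := R + ‖p‖ + 1 with hM
  have hM0 : 0 < M := by
    have : 0 ≤ ‖p‖ := norm_nonneg _
    nlinarith [norm_nonneg p]
  set c : ℂ := (M : ℂ) with hc
  have hcne : c ≠ 0 := by
    simp only [hc, Ne, Complex.ofReal_eq_zero]
    exact ne_of_gt hM0
  have hnc : ‖c⁻¹‖ = M⁻¹ := by
    rw [norm_inv, hc, Complex.norm_real, Real.norm_of_nonneg hM0.le]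
  refine ⟨δ / M, fun z => c⁻¹ • (z - p), ?_, ?_, ?_, ?_, ?_, ?_⟩
  · exact ((differentiable_id.sub_const p).const_smul c⁻¹).differentiableOn
  · intro x hx y hy hxy
    have := smul_right_injective (EuclideanSpace ℂ (Fin n)) (inv_ne_zero hcne) hxy
    have : x - p = y - p := this
    linear_combination (norm := module) this
  · rintro y ⟨z, hz, rfl⟩
    rw [mem_ball_zero_iff, norm_smul, hnc]
    have h1 : ‖z - p‖ ≤ ‖z‖ + ‖p‖ := norm_sub_le _ _
    have h2 : ‖z‖ ≤ R := by simpa using hR hz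
    have h3 : ‖z - p‖ < M := by nlinarith
    calc M⁻¹ * ‖z - p‖ < M⁻¹ * M := by
          exact mul_lt_mul_of_pos_left h3 (inv_pos.mpr hM0)
      _ = 1 := inv_mul_cancel₀ (ne_of_gt hM0)
  · simp
  · positivity
  · intro w hw
    rw [mem_ball_zero_iff] at hw
    refine ⟨p + c • w, hball ?_, ?_⟩
    · rw [mem_ball]
      have : dist (p + c • w) p = ‖c • w‖ := by
        rw [dist_eq_norm]; congr 1; abel
      rw [this, norm_smul, hc, Complex.norm_real, Real.norm_of_nonneg hM0.le]
      calc M * ‖w‖ < M * (δ / M) := by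
            exact mul_lt_mul_of_pos_left hw hM0
        _ = δ := by field_simp
    · show c⁻¹ • (p + c • w - p) = w
      rw [add_sub_cancel_left, smul_smul, inv_mul_cancel₀ hcne, one_smul]

lemma S_le_one [Nontrivial (EuclideanSpace ℂ (Fin n))] {D : Set (EuclideanSpace ℂ (Fin n))}
    {p : EuclideanSpace ℂ (Fin n)} {r : ℝ} (h : r ∈ S D p) : r ≤ 1 := by
  obtain ⟨f, _, _, him, _, hr, hcov⟩ := h
  by_contra hr1
  push_neg at hr1
  obtain ⟨x, hx⟩ := exists_norm_eq (EuclideanSpace ℂ (Fin n)) (zero_le_one (α := ℝ))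
  have hx1 : x ∈ ball (0 : EuclideanSpace ℂ (Fin n)) r := by
    rw [mem_ball_zero_iff, hx]; linarith
  have := him (hcov hx1)
  rw [mem_ball_zero_iff, hx] at this
  linarith

/-- Uniform Schwarz-type bound: a holomorphic map into the unit ball has uniformly
controlled oscillation on interior balls. -/
lemma schwarz_bound {D : Set (EuclideanSpace ℂ (Fin n))}
    {f : EuclideanSpace ℂ (Fin n) → EuclideanSpace ℂ (Fin n)}
    {p q : EuclideanSpace ℂ (Fin n)} {δ : ℝ}
    (hf : DifferentiableOn ℂ f D) (him : f '' D ⊆ ball 0 1)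
    (hball : ball p δ ⊆ D) (hδ : 0 < δ) (hq : dist q p < δ) :
    dist (f q) (f p) ≤ 2 / δ * dist q p := by
  rcases eq_or_ne q p with rfl | hne
  · simp
  have hd : (0:ℝ) < dist q p := dist_pos.mpr hne
  set v : EuclideanSpace ℂ (Fin n) := q - p with hv
  have hvn : ‖v‖ = dist q p := by rw [hv, ← dist_eq_norm]
  set R : ℝ := δ / ‖v‖ with hR
  have hR0 : 0 < R := by rw [hR, hvn]; positivity
  set h : ℂ → EuclideanSpace ℂ (Fin n) := fun t => f (p + t • v) with hh
  have hmapin : ∀ t : ℂ, t ∈ ball (0:ℂ) R → p + t • v ∈ D := by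
    intro t ht
    rw [mem_ball_zero_iff] at ht
    apply hball
    rw [mem_ball]
    have : dist (p + t • v) p = ‖t • v‖ := by rw [dist_eq_norm]; congr 1; abel
    rw [this, norm_smul]
    calc ‖t‖ * ‖v‖ < R * ‖v‖ := by
          apply mul_lt_mul_of_pos_right ht
          rw [hvn]; exact hd
      _ = δ := by
          rw [hR]
          exact div_mul_cancel₀ δ (by rw [hvn]; exact ne_of_gt hd)
  have hdiff : DifferentiableOn ℂ h (ball (0:ℂ) R) := by
    apply hf.comp
    · exact ((differentiable_id.smul_const v).const_add p).differentiableOn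
    · intro t ht; exact hmapin t ht
  have hh0 : h 0 = f p := by simp [hh]
  have hmaps : Set.MapsTo h (ball (0:ℂ) R) (ball (h 0) 2) := by
    intro t ht
    rw [mem_ball, hh0]
    have h1 : f (p + t • v) ∈ ball (0 : EuclideanSpace ℂ (Fin n)) 1 :=
      him ⟨_, hmapin t ht, rfl⟩
    have h2 : f p ∈ ball (0 : EuclideanSpace ℂ (Fin n)) 1 := by
      apply him ⟨p, ?_, rfl⟩
      exact hball (mem_ball_self hδ)
    rw [mem_ball_zero_iff] at h1 h2
    calc dist (h t) (f p) ≤ ‖h t‖ + ‖f p‖ := dist_le_norm_add_norm _ _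
      _ < 2 := by
        have : ‖h t‖ < 1 := by simpa [hh] using h1
        linarith
  have h1mem : (1 : ℂ) ∈ ball (0:ℂ) R := by
    rw [mem_ball_zero_iff, norm_one, hR, hvn]
    rw [lt_div_iff₀ hd]
    linarith
  have key := Complex.dist_le_div_mul_dist_of_mapsTo_ball hdiff (hmaps.mono_right ball_subset_closedBall) h1mem
  have hh1 : h 1 = f q := by
    have harg : p + (1:ℂ) • v = q := by
      rw [one_smul, hv]; abel
    simp only [hh, harg]
  rw [hh1, hh0] at key
  have hdist1 : dist (1:ℂ) 0 = 1 := by simp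
  rw [hdist1, mul_one] at key
  calc dist (f q) (f p) ≤ 2 / R := key
    _ = 2 / δ * dist q p := by
      rw [hR, hvn, div_div_eq_mul_div, div_mul_eq_mul_div]

/-- Transfer lemma: a witness at `p` with radius `r` can be recentered at any
point `q` at the cost of shrinking the radius. -/
lemma transfer {D : Set (EuclideanSpace ℂ (Fin n))} {q : EuclideanSpace ℂ (Fin n)} {r : ℝ}
    {f : EuclideanSpace ℂ (Fin n) → EuclideanSpace ℂ (Fin n)}
    (hf : DifferentiableOn ℂ f D) (hinj : Set.InjOn f D) (him : f '' D ⊆ ball 0 1)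
    (hr : 0 < r) (hcov : ball (0 : EuclideanSpace ℂ (Fin n)) r ⊆ f '' D)
    (he : ‖f q‖ < r) :
    (r - ‖f q‖) / (1 + ‖f q‖) ∈ S D q := by
  set e : ℝ := ‖f q‖ with hedef
  have he0 : 0 ≤ e := norm_nonneg _
  set c : ℂ := ((1 + e : ℝ) : ℂ) with hc
  have h1e : (0:ℝ) < 1 + e := by linarith
  have hcne : c ≠ 0 := by
    simp only [hc, Ne, Complex.ofReal_eq_zero]
    exact ne_of_gt h1e
  have hnc : ‖c‖ = 1 + e := by rw [hc, Complex.norm_real, Real.norm_of_nonneg h1e.le]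
  refine ⟨fun z => c⁻¹ • (f z - f q), ?_, ?_, ?_, ?_, ?_, ?_⟩
  · exact (hf.sub_const (f q)).const_smul c⁻¹
  · intro x hx y hy hxy
    have h1 := smul_right_injective (EuclideanSpace ℂ (Fin n)) (inv_ne_zero hcne) hxy
    have h2 : f x = f y := by
      have : f x - f q = f y - f q := h1
      linear_combination (norm := module) this
    exact hinj hx hy h2
  · rintro y ⟨z, hz, rfl⟩
    rw [mem_ball_zero_iff, norm_smul, norm_inv, hnc]
    have h1 : ‖f z‖ < 1 := by
      have := him ⟨z, hz, rfl⟩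
      rwa [mem_ball_zero_iff] at this
    have h2 : ‖f z - f q‖ ≤ ‖f z‖ + e := norm_sub_le _ _
    rw [inv_mul_lt_iff₀ h1e, mul_one]
    linarith
  · simp
  · apply div_pos <;> linarith
  · intro w hw
    rw [mem_ball_zero_iff] at hw
    have hy : f q + c • w ∈ ball (0 : EuclideanSpace ℂ (Fin n)) r := by
      rw [mem_ball_zero_iff]
      calc ‖f q + c • w‖ ≤ e + ‖c • w‖ := norm_add_le _ _
        _ = e + (1 + e) * ‖w‖ := by rw [norm_smul, hnc]
        _ < e + (1 + e) * ((r - e) / (1 + e)) := by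
            have := mul_lt_mul_of_pos_left hw h1e
            linarith
        _ = r := by field_simp; ring
    obtain ⟨z, hz, hfz⟩ := hcov hy
    refine ⟨z, hz, ?_⟩
    show c⁻¹ • (f z - f q) = w
    rw [hfz, add_sub_cancel_left, smul_smul, inv_mul_cancel₀ hcne, one_smul]

/-- Numerical inequality used to compare the transferred radius. -/
lemma aux_ineq {r e : ℝ} (he : 0 ≤ e) (hr : r ≤ 1) : r - 2 * e ≤ (r - e) / (1 + e) := by
  rw [le_div_iff₀ (by linarith : (0:ℝ) < 1 + e)]
  nlinarith

end Stmt4Aux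

open Stmt4Aux

/-- Continuity of squeezing functions.
The squeezing function of any bounded domain `D ⊆ ℂⁿ` is continuous on `D`. -/
theorem stmt_4 {n : ℕ} (D : Set (EuclideanSpace ℂ (Fin n)))
    (hDopen : IsOpen D) (hDconn : IsConnected D) (hDbd : Bornology.IsBounded D) :
    ContinuousOn (squeezingFn D) D := by
  rcases eq_or_ne n 0 with rfl | hn
  · -- trivial case: the space is a single point, the squeezing function is constant 0
    haveI : Subsingleton (EuclideanSpace ℂ (Fin 0)) :=
      (WithLp.equiv 2 (Fin 0 → ℂ)).subsingleton
    obtain ⟨d, hd⟩ := hDconn.nonempty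
    have h0 : ∀ p, squeezingFn D p = 0 := by
      intro p
      rw [squeezingFn_eq]
      have hsub : Set.Ioi (0:ℝ) ⊆ S D p := by
        intro r hr
        refine ⟨id, differentiableOn_id, Set.injOn_id D, ?_, ?_, hr, ?_⟩
        · rintro y ⟨z, _, rfl⟩
          rw [mem_ball_zero_iff]
          rw [Subsingleton.elim (id z) 0, norm_zero]
          norm_num
        · exact Subsingleton.elim _ _
        · intro x _
          exact ⟨d, hd, Subsingleton.elim _ _⟩
      have hnb : ¬ BddAbove (S D p) := by
        rintro ⟨M, hM⟩
        have h1 : max M 0 + 1 ∈ S D p := hsub (by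
          have := le_max_right M 0
          simp only [Set.mem_Ioi]; linarith)
        have h2 := hM h1
        have := le_max_left M 0
        linarith
      rw [csSup_of_not_bddAbove hnb, Real.sSup_empty]
    have : squeezingFn D = fun _ => 0 := funext h0
    rw [this]
    exact continuousOn_const
  · haveI : Nonempty (Fin n) := ⟨⟨0, Nat.pos_of_ne_zero hn⟩⟩
    haveI : Nontrivial (EuclideanSpace ℂ (Fin n)) :=
      (WithLp.equiv 2 (Fin n → ℂ)).nontrivial
    intro p hp
    rw [Metric.continuousWithinAt_iff]
    intro ε hε
    obtain ⟨δ₀, hδ₀, hball⟩ := Metric.isOpen_iff.mp hDopen p hp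
    have hbdd : ∀ x, BddAbove (S D x) := fun x => ⟨1, fun r hr => S_le_one hr⟩
    have hne_p : (S D p).Nonempty := S_nonempty hDopen hDbd hp
    -- positivity of the squeezing function at p
    obtain ⟨r₁, hr₁⟩ := id hne_p
    have hr₁pos : 0 < r₁ := hr₁.choose_spec.2.2.2.2.1
    have hsp_pos : 0 < sSup (S D p) := lt_of_lt_of_le hr₁pos (le_csSup (hbdd p) hr₁)
    -- pick a near-optimal witness at p
    obtain ⟨r₀, hr₀S, hr₀⟩ := exists_lt_of_lt_csSup hne_p
      (show sSup (S D p) - ε/2 < sSup (S D p) by linarith)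
    obtain ⟨f, hf, hfinj, hfim, hfp, hr₀pos, hfcov⟩ := hr₀S
    have hr₀le1 : r₀ ≤ 1 := S_le_one ⟨f, hf, hfinj, hfim, hfp, hr₀pos, hfcov⟩
    set m : ℝ := min (ε/8) (r₀/4) with hm
    have hm0 : 0 < m := by
      apply lt_min <;> linarith
    refine ⟨min (δ₀/2) (δ₀ * m), by positivity, ?_⟩
    intro q hq hdist
    set η : ℝ := dist q p with hη
    have hη0 : 0 ≤ η := dist_nonneg
    have hη1 : η < δ₀ / 2 := lt_of_lt_of_le hdist (min_le_left _ _)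
    have hη2 : η < δ₀ * m := lt_of_lt_of_le hdist (min_le_right _ _)
    have hηδ₀ : η < δ₀ := by linarith
    -- − Lower bound: squeezingFn D q > squeezingFn D p − ε
    have hfq : ‖f q‖ ≤ 2 / δ₀ * η := by
      have := schwarz_bound hf hfim hball hδ₀ hηδ₀
      rwa [hfp, dist_zero_right] at this
    have hfq2m : ‖f q‖ < 2 * m := by
      calc ‖f q‖ ≤ 2 / δ₀ * η := hfq
        _ < 2 / δ₀ * (δ₀ * m) := by
            apply mul_lt_mul_of_pos_left hη2; positivity
        _ = 2 * m := by field_simp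
    have hfqr₀ : ‖f q‖ < r₀ := by
      have : 2 * m ≤ r₀ / 2 := by
        have := min_le_right (ε/8) (r₀/4)
        rw [hm]; linarith
      linarith
    have htrans := transfer hf hfinj hfim hr₀pos hfcov hfqr₀
    have hlow : r₀ - 2 * ‖f q‖ ≤ sSup (S D q) := by
      calc r₀ - 2 * ‖f q‖ ≤ (r₀ - ‖f q‖) / (1 + ‖f q‖) :=
            aux_ineq (norm_nonneg _) hr₀le1
        _ ≤ sSup (S D q) := le_csSup (hbdd q) htrans
    have hlower : sSup (S D p) - ε < sSup (S D q) := by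
      have h4m : 4 * m ≤ ε / 2 := by
        have := min_le_left (ε/8) (r₀/4)
        rw [hm]; linarith
      nlinarith
    -- − Upper bound: squeezingFn D q < squeezingFn D p + ε
    have hballq : ball q (δ₀ / 2) ⊆ D := by
      intro x hx
      apply hball
      rw [mem_ball] at hx ⊢
      calc dist x p ≤ dist x q + dist q p := dist_triangle _ _ _
        _ < δ₀ / 2 + δ₀ / 2 := by rw [← hη]; exact add_lt_add hx hη1
        _ = δ₀ := by ring
    have hupper : sSup (S D q) < sSup (S D p) + ε := by
      have hneq : (S D q).Nonempty := S_nonempty hDopen hDbd hq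
      have hkey : ∀ r ∈ S D q, r ≤ sSup (S D p) + 8 / δ₀ * η := by
        rintro r ⟨g, hg, hginj, hgim, hgq, hrpos, hgcov⟩
        have hrle1 : r ≤ 1 := S_le_one ⟨g, hg, hginj, hgim, hgq, hrpos, hgcov⟩
        have hgp : ‖g p‖ ≤ 2 / (δ₀/2) * dist p q := by
          have := schwarz_bound hg hgim hballq (by linarith) (by rw [dist_comm]; exact hη1)
          rwa [hgq, dist_zero_right] at this
        have hgp' : ‖g p‖ ≤ 4 / δ₀ * η := by
          have h24 : 2 / (δ₀/2) = 4 / δ₀ := by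
            rw [div_div_eq_mul_div]; norm_num
          have hpq : dist p q = η := by rw [dist_comm, ← hη]
          rw [h24, hpq] at hgp
          exact hgp
        by_cases hcase : ‖g p‖ < r
        · have htrans' := transfer hg hginj hgim hrpos hgcov hcase
          have h1 : (r - ‖g p‖) / (1 + ‖g p‖) ≤ sSup (S D p) := le_csSup (hbdd p) htrans'
          have h2 : r - 2 * ‖g p‖ ≤ (r - ‖g p‖) / (1 + ‖g p‖) :=
            aux_ineq (norm_nonneg _) hrle1
          have h3 : 8 / δ₀ * η = 2 * (4 / δ₀ * η) := by ring
          linarith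
        · push_neg at hcase
          have h2 : (0:ℝ) ≤ 4 / δ₀ * η := by positivity
          have h3 : 8 / δ₀ * η = 2 * (4 / δ₀ * η) := by ring
          linarith
      have h8 : 8 / δ₀ * η < ε := by
        calc 8 / δ₀ * η < 8 / δ₀ * (δ₀ * m) := by
              apply mul_lt_mul_of_pos_left hη2; positivity
          _ = 8 * m := by field_simp
          _ ≤ ε := by
              have := min_le_left (ε/8) (r₀/4)
              rw [hm]; linarith
      calc sSup (S D q) ≤ sSup (S D p) + 8 / δ₀ * η := csSup_le hneq hkey
        _ < sSup (S D p) + ε := by linarith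
    rw [Real.dist_eq, abs_sub_lt_iff]
    constructor
    · rw [squeezingFn_eq, squeezingFn_eq]; linarith
    · rw [squeezingFn_eq, squeezingFn_eq]; linarith
end

section
/- Let D be a bounded domain in ℂⁿ. Then for all x, y ∈ D one has |s_D(x) − s_D(y)| ≤ 2·tanh(K_D(x, y)/2), where K_D is the Kobayashi distance on D. In other words, s_D is Lipschitz with constant 2 with respect to the metric T(x, y) = tanh(K_D(x, y)/2). -/
open Metric

/-- Inverse hyperbolic tangent: `artanh x = (1/2) log((1+x)/(1-x))`. -/
noncomputable def artanh (x : ℝ) : ℝ := Real.log ((1 + x) / (1 - x)) / 2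

/-- The Poincaré distance on the unit disc: `ρ(a,b) = 2 artanh |(a-b)/(1 - ā b)|`. -/
noncomputable def poincareDist (a b : ℂ) : ℝ :=
  2 * artanh ‖(a - b) / (1 - (starRingEnd ℂ) a * b)‖

/-- The Kobayashi distance on a set `D`: the infimum over finite chains of holomorphic
discs `φ i : Δ → D` joining `x` to `y` of the sum of Poincaré distances. -/
noncomputable def kobayashiDist {E : Type*} [NormedAddCommGroup E] [NormedSpace ℂ E]
    (D : Set E) (x y : E) : ℝ :=
  sInf { t : ℝ | ∃ (k : ℕ) (φ : Fin (k + 1) → ℂ → E) (a b : Fin (k + 1) → ℂ),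
    (∀ i, DifferentiableOn ℂ (φ i) (Metric.ball (0 : ℂ) 1) ∧
      (φ i) '' (Metric.ball (0 : ℂ) 1) ⊆ D ∧
      a i ∈ Metric.ball (0 : ℂ) 1 ∧ b i ∈ Metric.ball (0 : ℂ) 1) ∧
    φ 0 (a 0) = x ∧ φ (Fin.last k) (b (Fin.last k)) = y ∧
    (∀ i : Fin k, φ i.castSucc (b i.castSucc) = φ i.succ (a i.succ)) ∧
    t = ∑ i, poincareDist (a i) (b i) }

open Complex ComplexConjugate

noncomputable def mob (a b : ℂ) : ℂ := (a - b) / (1 - (starRingEnd ℂ) a * b)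

lemma normSq_lt_one_of_abs {a : ℂ} (ha : ‖a‖ < 1) : normSq a < 1 := by
  rw [← Complex.sq_norm]; nlinarith [norm_nonneg a]

lemma mob_id (a b : ℂ) : normSq (1 - conj a * b) - normSq (a - b)
    = (1 - normSq a) * (1 - normSq b) := by
  simp only [Complex.normSq_apply, Complex.sub_re, Complex.sub_im, Complex.mul_re,
    Complex.mul_im, Complex.one_re, Complex.one_im, Complex.conj_re, Complex.conj_im]
  ring

lemma one_sub_ne {a b : ℂ} (ha : ‖a‖ < 1) (hb : ‖b‖ < 1) : 1 - conj a * b ≠ 0 := by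
  intro h
  have h1 := normSq_lt_one_of_abs ha
  have h2 := normSq_lt_one_of_abs hb
  have := mob_id a b
  rw [h] at this
  simp only [map_zero] at this
  nlinarith [normSq_nonneg (a - b)]

lemma abs_sub_lt (a b : ℂ) (ha : ‖a‖ < 1) (hb : ‖b‖ < 1) :
    ‖a - b‖ < ‖1 - conj a * b‖ := by
  have h1 := normSq_lt_one_of_abs ha
  have h2 := normSq_lt_one_of_abs hb
  have h3 := mob_id a b
  have e1 := Complex.sq_norm (a - b)
  have e2 := Complex.sq_norm (1 - conj a * b)
  nlinarith [norm_nonneg (a - b), norm_nonneg (1 - conj a * b)]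

lemma abs_mob_lt_one {a b : ℂ} (ha : ‖a‖ < 1) (hb : ‖b‖ < 1) : ‖mob a b‖ < 1 := by
  have key := abs_sub_lt a b ha hb
  rw [mob, norm_div, div_lt_one (lt_of_le_of_lt (norm_nonneg _) key)]
  exact key

lemma abs_mob_symm (a b : ℂ) : ‖mob a b‖ = ‖mob b a‖ := by
  rw [mob, mob, norm_div, norm_div]
  congr 1
  · exact norm_sub_rev a b
  · rw [← Complex.norm_conj]
    simp only [map_sub, map_one, map_mul, Complex.conj_conj]
    rw [mul_comm]

lemma mob_invol {a b : ℂ} (ha : ‖a‖ < 1) (hb : ‖b‖ < 1) : mob a (mob a b) = b := by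
  have hd := one_sub_ne ha hb
  have h3 : 1 - conj a * mob a b ≠ 0 := one_sub_ne ha (abs_mob_lt_one ha hb)
  rw [mob] at h3
  simp only [mob]
  have h4 : 1 - conj a * a ≠ 0 := one_sub_ne ha ha
  have e : a - (a - b) / (1 - conj a * b) = b * (1 - conj a * a) / (1 - conj a * b) := by
    rw [eq_div_iff hd, sub_mul, div_mul_cancel₀ _ hd]; ring
  have e2 : 1 - conj a * ((a - b) / (1 - conj a * b)) = (1 - conj a * a) / (1 - conj a * b) := by
    rw [eq_div_iff hd, ← mul_div_assoc, sub_mul, div_mul_cancel₀ _ hd]; ring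
  rw [e, e2, div_div_div_cancel_right₀ hd, mul_div_assoc, div_self h4, mul_one]

lemma one_sub_conj_ne {a b : ℂ} (ha : ‖a‖ < 1) (hb : ‖b‖ < 1) : 1 - a * conj b ≠ 0 := by
  intro h; apply one_sub_ne ha hb
  have := congrArg (starRingEnd ℂ) h
  simpa [map_sub, map_mul] using this

lemma abs_mob_inv {u v w : ℂ} (hu : ‖u‖ < 1) (hv : ‖v‖ < 1) (hw : ‖w‖ < 1) :
    ‖mob (mob v u) (mob v w)‖ = ‖mob u w‖ := by
  have h1 := one_sub_ne hv hu
  have h2 := one_sub_ne hv hw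
  have h3 := one_sub_ne hu hw
  have h1' := one_sub_conj_ne hv hu
  have hvv := one_sub_ne hv hv
  have eN : mob v u - mob v w = ((w - u) * (1 - v * conj v)) / ((1 - conj v * u) * (1 - conj v * w)) := by
    simp only [mob]
    rw [div_sub_div _ _ h1 h2]; congr 1; ring
  have eD : 1 - conj (mob v u) * mob v w
      = ((1 - v * conj v) * (1 - conj u * w)) / ((1 - v * conj u) * (1 - conj v * w)) := by
    simp only [mob, map_div₀, map_sub, map_one, map_mul, Complex.conj_conj]
    rw [div_mul_div_comm, one_sub_div (mul_ne_zero h1' h2)]; congr 1; ring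
  have hvv' : 1 - v * conj v ≠ 0 := by
    intro h; apply hvv; have := congrArg (starRingEnd ℂ) h
    simpa [map_sub, map_mul, mul_comm] using this
  have k1 : ‖w - u‖ = ‖u - w‖ := norm_sub_rev w u
  have k2 : ‖1 - v * conj u‖ = ‖1 - conj v * u‖ := by
    rw [← Complex.norm_conj]; simp [map_sub, map_mul]
  have p1 : ‖1 - conj v * u‖ ≠ 0 := (norm_ne_zero_iff).2 h1
  have p2 : ‖1 - conj v * w‖ ≠ 0 := (norm_ne_zero_iff).2 h2
  have p3 : ‖1 - conj u * w‖ ≠ 0 := (norm_ne_zero_iff).2 h3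
  have p4 : ‖1 - v * conj v‖ ≠ 0 := (norm_ne_zero_iff).2 hvv'
  rw [mob, eN, eD]
  rw [mob, norm_div, norm_div, norm_div, norm_mul, norm_mul, norm_mul, norm_mul, k1, k2]
  rw [div_div_div_cancel_right₀ (mul_ne_zero p1 p2), mul_comm (‖1 - v * conj v‖),
    mul_div_mul_right _ _ p4, norm_div]

lemma abs_mob_le_elem {p q : ℂ} (hp : ‖p‖ < 1) (hq : ‖q‖ < 1) :
    ‖mob p q‖ ≤ (‖p‖ + ‖q‖) / (1 + ‖p‖ * ‖q‖) := by
  have hne := one_sub_ne hp hq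
  have hd : (0:ℝ) < ‖1 - conj p * q‖ := by
    simpa [norm_pos_iff] using hne
  have hd2 : (0:ℝ) < 1 + ‖p‖ * ‖q‖ := by positivity
  rw [mob, norm_div, div_le_div_iff₀ hd hd2]
  have h0 : (0:ℝ) ≤ ‖p - q‖ * (1 + ‖p‖ * ‖q‖) := by positivity
  have hb0 : (0:ℝ) ≤ (‖p‖ + ‖q‖) * ‖1 - conj p * q‖ := by positivity
  have hre : |(p * conj q).re| ≤ ‖p‖ * ‖q‖ := by
    calc |(p * conj q).re| ≤ ‖p * conj q‖ := Complex.abs_re_le_norm _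
      _ = ‖p‖ * ‖q‖ := by rw [norm_mul, Complex.norm_conj]
  have hre' := abs_le.1 hre
  have hsp : (‖p‖)^2 = normSq p := Complex.sq_norm p
  have hsq : (‖q‖)^2 = normSq q := Complex.sq_norm q
  have h1 : normSq p < 1 := normSq_lt_one_of_abs hp
  have h2 : normSq q < 1 := normSq_lt_one_of_abs hq
  have e1 : (‖p - q‖)^2 = (‖p‖)^2 + (‖q‖)^2 - 2 * (p * conj q).re := by
    rw [Complex.sq_norm, Complex.normSq_sub, hsp, hsq]
  have e2 : (‖1 - conj p * q‖)^2
      = 1 + (‖p‖)^2 * (‖q‖)^2 - 2 * (p * conj q).re := by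
    rw [Complex.sq_norm, hsp, hsq]
    have ha := mob_id p q
    have hb := Complex.normSq_sub p q
    nlinarith [ha, hb]
  have key : ((‖p‖ + ‖q‖) * ‖1 - conj p * q‖)^2
      - (‖p - q‖ * (1 + ‖p‖ * ‖q‖))^2
      = 2 * ((p * conj q).re + ‖p‖ * ‖q‖) * (1 - (‖p‖)^2) * (1 - (‖q‖)^2) := by
    rw [mul_pow, mul_pow, e1, e2]; ring
  have hp1 : (‖p‖)^2 < 1 := by nlinarith [norm_nonneg p]
  have hq1 : (‖q‖)^2 < 1 := by nlinarith [norm_nonneg q]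
  have hnn : (0:ℝ) ≤ 2 * ((p * conj q).re + ‖p‖ * ‖q‖) * (1 - (‖p‖)^2) * (1 - (‖q‖)^2) := by
    have h3 : (0:ℝ) ≤ (p * conj q).re + ‖p‖ * ‖q‖ := by linarith [hre'.1]
    have h4 : (0:ℝ) ≤ 1 - (‖p‖)^2 := by linarith
    have h5 : (0:ℝ) ≤ 1 - (‖q‖)^2 := by linarith
    have := mul_nonneg (mul_nonneg (mul_nonneg (by norm_num : (0:ℝ) ≤ 2) h3) h4) h5
    linarith
  nlinarith [key, hnn, h0, hb0]

lemma artanh_nonneg {s : ℝ} (h0 : 0 ≤ s) (h1 : s < 1) : 0 ≤ artanh s := by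
  unfold artanh
  have : (1:ℝ) ≤ (1 + s) / (1 - s) := by
    rw [le_div_iff₀ (by linarith)]; linarith
  have := Real.log_nonneg this
  linarith

lemma artanh_le_artanh {s t : ℝ} (h0 : 0 ≤ s) (hst : s ≤ t) (h1 : t < 1) :
    artanh s ≤ artanh t := by
  unfold artanh
  have hs1 : s < 1 := lt_of_le_of_lt hst h1
  have h : (1 + s) / (1 - s) ≤ (1 + t) / (1 - t) := by
    rw [div_le_div_iff₀ (by linarith) (by linarith)]; nlinarith
  have hpos : (0:ℝ) < (1 + s) / (1 - s) := div_pos (by linarith) (by linarith)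
  have := Real.log_le_log hpos h
  linarith

lemma artanh_sum {s t : ℝ} (h0s : 0 ≤ s) (h1s : s < 1) (h0t : 0 ≤ t) (h1t : t < 1) :
    artanh ((s + t) / (1 + s * t)) = artanh s + artanh t := by
  unfold artanh
  have hst : (0:ℝ) < 1 + s * t := by positivity
  have e : (1 + (s + t) / (1 + s * t)) / (1 - (s + t) / (1 + s * t))
      = ((1 + s) / (1 - s)) * ((1 + t) / (1 - t)) := by
    have A : (0:ℝ) < 1 - s := by linarith
    have B : (0:ℝ) < 1 - t := by linarith
    have e1 : 1 + (s + t) / (1 + s * t) = (1 + s) * (1 + t) / (1 + s * t) := by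
      field_simp; ring
    have e2 : 1 - (s + t) / (1 + s * t) = (1 - s) * (1 - t) / (1 + s * t) := by
      field_simp; ring
    rw [e1, e2, div_div_div_eq]
    rw [div_mul_div_comm, div_eq_div_iff (by positivity) (by positivity)]
    ring
  have A : (0:ℝ) < 1 - s := by linarith
  have B : (0:ℝ) < 1 - t := by linarith
  rw [e, Real.log_mul (div_pos (by linarith) A).ne' (div_pos (by linarith) B).ne']
  ring

lemma tanh_artanh {s : ℝ} (h0 : 0 ≤ s) (h1 : s < 1) : Real.tanh (artanh s) = s := by
  have hu : (0:ℝ) < (1 + s) / (1 - s) := div_pos (by linarith) (by linarith)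
  rw [Real.tanh_eq_sinh_div_cosh, Real.sinh_eq, Real.cosh_eq]
  set w := Real.exp (artanh s) with hw
  have hwpos : 0 < w := Real.exp_pos _
  have hwsq : w ^ 2 = (1 + s) / (1 - s) := by
    have h2 : artanh s + artanh s = Real.log ((1 + s) / (1 - s)) := by unfold artanh; ring
    rw [hw, sq, ← Real.exp_add, h2, Real.exp_log hu]
  have hinv : Real.exp (-(artanh s)) = w⁻¹ := by
    rw [Real.exp_neg, hw]
  rw [hinv]
  have hA : (0:ℝ) < 1 - s := by linarith
  have hden : (0:ℝ) < w + w⁻¹ := by positivity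
  have step : (w - w⁻¹) / 2 / ((w + w⁻¹) / 2) = (w^2 - 1)/(w^2 + 1) := by
    rw [div_div_div_comm]
    norm_num
    rw [div_eq_div_iff hden.ne' (by positivity)]
    field_simp
  rw [step, hwsq]
  rw [div_sub' hA.ne', div_add' _ _ _ hA.ne']
  rw [div_div_div_cancel_right₀]
  · field_simp; ring
  · exact hA.ne'

lemma tanh_mono {a b : ℝ} (h : a ≤ b) : Real.tanh a ≤ Real.tanh b := by
  rw [Real.tanh_eq_sinh_div_cosh, Real.tanh_eq_sinh_div_cosh,
    div_le_div_iff₀ (Real.cosh_pos _) (Real.cosh_pos _)]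
  have : (0:ℝ) ≤ Real.sinh (b - a) := by
    rw [← Real.sinh_zero]
    exact Real.sinh_le_sinh.2 (by linarith)
  rw [Real.sinh_sub] at this
  nlinarith [Real.cosh_pos a, Real.cosh_pos b]

lemma artanh_triangle {u v w : ℂ} (hu : ‖u‖ < 1) (hv : ‖v‖ < 1) (hw : ‖w‖ < 1) :
    artanh (‖mob u w‖) ≤ artanh (‖mob u v‖) + artanh (‖mob v w‖) := by
  set p := mob v u with hp
  set q := mob v w with hq
  have hp1 : ‖p‖ < 1 := abs_mob_lt_one hv hu
  have hq1 : ‖q‖ < 1 := abs_mob_lt_one hv hw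
  have h1 : ‖mob u w‖ = ‖mob p q‖ := (abs_mob_inv hu hv hw).symm
  have h2 : ‖mob p q‖ ≤ (‖p‖ + ‖q‖) / (1 + ‖p‖ * ‖q‖) := abs_mob_le_elem hp1 hq1
  have hX1 : (‖p‖ + ‖q‖) / (1 + ‖p‖ * ‖q‖) < 1 := by
    rw [div_lt_one (by positivity)]
    nlinarith [norm_nonneg p, norm_nonneg q]
  calc artanh (‖mob u w‖) = artanh (‖mob p q‖) := by rw [h1]
    _ ≤ artanh ((‖p‖ + ‖q‖) / (1 + ‖p‖ * ‖q‖)) :=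
        artanh_le_artanh (norm_nonneg _) h2 hX1
    _ = artanh (‖p‖) + artanh (‖q‖) :=
        artanh_sum (norm_nonneg _) hp1 (norm_nonneg _) hq1
    _ = artanh (‖mob u v‖) + artanh (‖mob v w‖) := by
        rw [hp, hq, abs_mob_symm v u]

lemma mem_ball_iff_abs {z : ℂ} : z ∈ ball (0:ℂ) 1 ↔ ‖z‖ < 1 := by
  simp [mem_ball, Complex.dist_eq]

lemma mob_differentiableOn {a : ℂ} (ha : ‖a‖ < 1) :
    DifferentiableOn ℂ (fun z => mob a z) (ball 0 1) := by
  unfold mob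
  apply DifferentiableOn.div
  · fun_prop
  · fun_prop
  · intro z hz
    exact one_sub_ne ha (mem_ball_iff_abs.1 hz)

lemma schwarz_pick {f : ℂ → ℂ} (hd : DifferentiableOn ℂ f (ball 0 1))
    (hm : Set.MapsTo f (ball 0 1) (ball 0 1)) {a b : ℂ} (ha : ‖a‖ < 1) (hb : ‖b‖ < 1) :
    ‖mob (f a) (f b)‖ ≤ ‖mob a b‖ := by
  have hfa : ‖f a‖ < 1 := mem_ball_iff_abs.1 (hm (mem_ball_iff_abs.2 ha))
  set g : ℂ → ℂ := fun z => mob (f a) (f (mob a z)) with hg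
  have hmob_maps : Set.MapsTo (fun z => mob a z) (ball 0 1) (ball (0:ℂ) 1) := by
    intro z hz
    exact mem_ball_iff_abs.2 (abs_mob_lt_one ha (mem_ball_iff_abs.1 hz))
  have hfm_maps : Set.MapsTo (fun z => f (mob a z)) (ball 0 1) (ball (0:ℂ) 1) :=
    fun z hz => hm (hmob_maps hz)
  have hg_diff : DifferentiableOn ℂ g (ball 0 1) := by
    apply DifferentiableOn.comp (mob_differentiableOn hfa)
    · exact DifferentiableOn.comp hd (mob_differentiableOn ha) hmob_maps
    · exact hfm_maps
  have hg_maps : Set.MapsTo g (ball 0 1) (ball 0 1) := by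
    intro z hz
    exact mem_ball_iff_abs.2 (abs_mob_lt_one hfa (mem_ball_iff_abs.1 (hfm_maps hz)))
  have hg0 : g 0 = 0 := by
    have h1 : mob a 0 = a := by simp [mob]
    show mob (f a) (f (mob a 0)) = 0
    rw [h1, mob, sub_self, zero_div]
  have := Complex.norm_le_norm_of_mapsTo_ball hg_diff (hg_maps.mono_right ball_subset_closedBall) hg0
    (z := mob a b) (abs_mob_lt_one ha hb)
  have e : g (mob a b) = mob (f a) (f b) := by
    show mob (f a) (f (mob a (mob a b))) = mob (f a) (f b)
    rw [mob_invol ha hb]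
  rwa [e] at this

lemma poincare_eq (a b : ℂ) : poincareDist a b = 2 * artanh (‖mob a b‖) := rfl

lemma chain_triangle (k : ℕ) (c : ℕ → ℂ) (h : ∀ j ≤ k + 1, ‖c j‖ < 1) :
    artanh (‖mob (c 0) (c (k+1))‖) ≤
      ∑ i ∈ Finset.range (k+1), artanh (‖mob (c i) (c (i+1))‖) := by
  induction k with
  | zero => simp
  | succ m ih =>
    have h' : ∀ j ≤ m + 1, ‖c j‖ < 1 := fun j hj => h j (by omega)
    have h0 : ‖c 0‖ < 1 := h 0 (by omega)
    have h1 : ‖c (m+1)‖ < 1 := h (m+1) (by omega)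
    have h2 : ‖c (m+2)‖ < 1 := h (m+2) (by omega)
    have tri := artanh_triangle h0 h1 h2
    rw [Finset.sum_range_succ]
    calc artanh (‖mob (c 0) (c (m+1+1))‖)
        ≤ artanh (‖mob (c 0) (c (m+1))‖) + artanh (‖mob (c (m+1)) (c (m+1+1))‖) := tri
      _ ≤ (∑ i ∈ Finset.range (m+1), artanh (‖mob (c i) (c (i+1))‖))
            + artanh (‖mob (c (m+1)) (c (m+1+1))‖) := by
          exact add_le_add_left (ih h') _

lemma contraction {E : Type*} [NormedAddCommGroup E] [NormedSpace ℂ E]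
    (D : Set E) (F : E → ℂ) (hF : DifferentiableOn ℂ F D) (hFm : ∀ z ∈ D, ‖F z‖ < 1)
    (x y : E) (hx : x ∈ D) (hy : y ∈ D) (t : ℝ)
    (ht : t ∈ { t : ℝ | ∃ (k : ℕ) (φ : Fin (k + 1) → ℂ → E) (a b : Fin (k + 1) → ℂ),
      (∀ i, DifferentiableOn ℂ (φ i) (Metric.ball (0 : ℂ) 1) ∧
        (φ i) '' (Metric.ball (0 : ℂ) 1) ⊆ D ∧
        a i ∈ Metric.ball (0 : ℂ) 1 ∧ b i ∈ Metric.ball (0 : ℂ) 1) ∧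
      φ 0 (a 0) = x ∧ φ (Fin.last k) (b (Fin.last k)) = y ∧
      (∀ i : Fin k, φ i.castSucc (b i.castSucc) = φ i.succ (a i.succ)) ∧
      t = ∑ i, poincareDist (a i) (b i) }) :
    2 * artanh (‖mob (F x) (F y)‖) ≤ t := by
  obtain ⟨k, φ, a, b, hall, h0, hlast, hmatch, rfl⟩ := ht
  -- each disc composed with F
  have hφD : ∀ (i : Fin (k+1)) (z : ℂ), z ∈ ball (0:ℂ) 1 → φ i z ∈ D := by
    intro i z hz
    exact (hall i).2.1 ⟨z, hz, rfl⟩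
  have hSP : ∀ i : Fin (k+1),
      ‖mob (F (φ i (a i))) (F (φ i (b i)))‖ ≤ ‖mob (a i) (b i)‖ := by
    intro i
    have hdi : DifferentiableOn ℂ (F ∘ φ i) (ball 0 1) :=
      hF.comp (hall i).1 (fun z hz => hφD i z hz)
    have hmi : Set.MapsTo (F ∘ φ i) (ball 0 1) (ball 0 1) := by
      intro z hz
      exact mem_ball_iff_abs.2 (hFm _ (hφD i z hz))
    exact schwarz_pick hdi hmi (mem_ball_iff_abs.1 (hall i).2.2.1)
      (mem_ball_iff_abs.1 (hall i).2.2.2)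
  -- the chain of points
  set c : ℕ → ℂ := fun j => if h : j < k + 1 then F (φ ⟨j, h⟩ (a ⟨j, h⟩))
    else F (φ (Fin.last k) (b (Fin.last k))) with hc
  have hcj : ∀ j (hj : j ≤ k), c j = F (φ ⟨j, by omega⟩ (a ⟨j, by omega⟩)) := by
    intro j hj
    simp only [hc, dif_pos (by omega : j < k + 1)]
  have hc0 : c 0 = F x := by rw [hcj 0 (by omega)]; exact congrArg F h0
  have hck : c (k+1) = F y := by
    simp only [hc, dif_neg (by omega : ¬ k + 1 < k + 1)]
    rw [hlast]
  have hstep : ∀ j (hj : j ≤ k), c (j + 1) = F (φ ⟨j, by omega⟩ (b ⟨j, by omega⟩)) := by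
    intro j hj
    rcases eq_or_lt_of_le hj with rfl | hlt
    · simp only [hc, dif_neg (by omega : ¬ j + 1 < j + 1)]
      rfl
    · have hj1 : j + 1 < k + 1 := by omega
      simp only [hc, dif_pos hj1]
      have := hmatch ⟨j, by omega⟩
      simp only [Fin.castSucc, Fin.succ] at this
      rw [← this]
      rfl
  have hcball : ∀ j, j ≤ k + 1 → ‖c j‖ < 1 := by
    intro j hj
    rcases Nat.lt_or_ge j (k+1) with h | h
    · rw [hcj j (by omega)]
      exact hFm _ (hφD _ _ (hall ⟨j, h⟩).2.2.1)
    · have : j = k + 1 := by omega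
      rw [this, hck]
      exact hFm _ hy
  have main := chain_triangle k c hcball
  rw [hc0, hck] at main
  -- bound each term
  have hterm : ∀ j (hj : j < k + 1),
      artanh (‖mob (c j) (c (j+1))‖) ≤ poincareDist (a ⟨j, hj⟩) (b ⟨j, hj⟩) / 2 := by
    intro j hj
    have hj' : j ≤ k := by omega
    rw [hcj j hj', hstep j hj']
    rw [poincare_eq]
    have hsp := hSP ⟨j, by omega⟩
    have hm1 := abs_mob_lt_one (mem_ball_iff_abs.1 (hall ⟨j, by omega⟩).2.2.1)
      (mem_ball_iff_abs.1 (hall ⟨j, by omega⟩).2.2.2)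
    have := artanh_le_artanh (norm_nonneg _) hsp hm1
    linarith
  set g : ℕ → ℝ := fun j => if h : j < k + 1 then poincareDist (a ⟨j, h⟩) (b ⟨j, h⟩) / 2 else 0
    with hg
  have hterm' : ∀ j ∈ Finset.range (k+1), artanh (‖mob (c j) (c (j+1))‖) ≤ g j := by
    intro j hj
    have hj' : j < k + 1 := Finset.mem_range.1 hj
    simp only [hg, dif_pos hj']
    exact hterm j hj'
  have hsum := Finset.sum_le_sum hterm'
  have e : ∑ j ∈ Finset.range (k+1), g j = (∑ i : Fin (k+1), poincareDist (a i) (b i)) / 2 := by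
    rw [← Fin.sum_univ_eq_sum_range g (k+1), Finset.sum_div]
    apply Finset.sum_congr rfl
    intro i _
    simp only [hg, dif_pos i.isLt, Fin.eta]
  rw [e] at hsum
  linarith

lemma chain_nonempty {E : Type*} [NormedAddCommGroup E] [NormedSpace ℂ E]
    (D : Set E) (hDopen : IsOpen D) (hDconn : IsConnected D)
    (x y : E) (hx : x ∈ D) (hy : y ∈ D) :
    { t : ℝ | ∃ (k : ℕ) (φ : Fin (k + 1) → ℂ → E) (a b : Fin (k + 1) → ℂ),
      (∀ i, DifferentiableOn ℂ (φ i) (Metric.ball (0 : ℂ) 1) ∧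
        (φ i) '' (Metric.ball (0 : ℂ) 1) ⊆ D ∧
        a i ∈ Metric.ball (0 : ℂ) 1 ∧ b i ∈ Metric.ball (0 : ℂ) 1) ∧
      φ 0 (a 0) = x ∧ φ (Fin.last k) (b (Fin.last k)) = y ∧
      (∀ i : Fin k, φ i.castSucc (b i.castSucc) = φ i.succ (a i.succ)) ∧
      t = ∑ i, poincareDist (a i) (b i) }.Nonempty := by
  have hpc : IsPathConnected D := (hDopen.isConnected_iff_isPathConnected).1 hDconn
  obtain ⟨γ, hγ⟩ := hpc.joinedIn x hx y hy
  have hKc : IsCompact (Set.range γ) := isCompact_range γ.continuous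
  have hKD : Set.range γ ⊆ D := by
    rintro _ ⟨t, rfl⟩; exact hγ t
  obtain ⟨δ, hδpos, hδ⟩ := hKc.exists_thickening_subset_open hDopen hKD
  have hball : ∀ t : unitInterval, ball (γ t) δ ⊆ D := by
    intro t z hz
    apply hδ
    rw [Metric.mem_thickening_iff]
    exact ⟨γ t, ⟨t, rfl⟩, hz⟩
  have huc : UniformContinuous γ := CompactSpace.uniformContinuous_of_continuous γ.continuous
  rw [Metric.uniformContinuous_iff] at huc
  obtain ⟨η, hηpos, hη⟩ := huc (δ/2) (by linarith)
  obtain ⟨k, hk⟩ := exists_nat_one_div_lt hηpos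
  -- partition points
  set m : ℕ := k + 1 with hm
  have hmpos : (0:ℝ) < m := by positivity
  set u : ℕ → unitInterval := fun j => ⟨min ((j:ℝ)/m) 1, by
    constructor
    · exact le_min (by positivity) zero_le_one
    · exact min_le_right _ _⟩ with hu
  have huval : ∀ j, j ≤ m → ((u j : ℝ)) = (j:ℝ)/m := by
    intro j hj
    simp only [hu]
    rw [min_eq_left]
    rw [div_le_one hmpos]
    exact_mod_cast hj
  set p : ℕ → E := fun j => γ (u j) with hp
  have hpd : ∀ j, j < m → dist (p (j+1)) (p j) < δ/2 := by
    intro j hj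
    apply hη
    rw [Subtype.dist_eq]
    rw [huval (j+1) (by omega), huval j (by omega)]
    rw [Real.dist_eq]
    rw [hm]; push_cast
    have e : ((j:ℝ)+1)/((k:ℝ)+1) - (j:ℝ)/((k:ℝ)+1) = 1/((k:ℝ)+1) := by ring
    rw [e, abs_of_pos (by positivity)]
    exact hk
  set φ : Fin (k+1) → ℂ → E := fun i z => p i + (2*z) • (p (i+1) - p i) with hφ
  refine ⟨∑ i : Fin (k+1), poincareDist 0 (1/2), k, φ, (fun _ => 0), (fun _ => 1/2),
    ⟨?_, ?_, ?_, ?_, rfl⟩⟩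
  · intro i
    refine ⟨?_, ?_, ?_, ?_⟩
    · apply DifferentiableOn.add
      · exact differentiableOn_const _
      · exact ((differentiable_id.const_mul (2:ℂ)).smul_const _).differentiableOn
    · rintro _ ⟨z, hz, rfl⟩
      apply hball (u i)
      rw [mem_ball]
      simp only [hφ]
      rw [dist_eq_norm]
      have : p ↑i + (2*z) • (p (↑i+1) - p ↑i) - γ (u ↑i) = (2*z) • (p (↑i+1) - p ↑i) := by
        simp only [hp]; abel
      rw [this, norm_smul]
      have hz1 : ‖(2*z : ℂ)‖ ≤ 2 := by
        rw [norm_mul]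
        simp only [Complex.norm_ofNat]  -- ‖2‖ = 2 ?
        have : ‖z‖ < 1 := mem_ball_zero_iff.1 hz
        nlinarith [norm_nonneg z]
      have hd : ‖p (↑i+1) - p ↑i‖ < δ/2 := by
        rw [← dist_eq_norm]
        exact hpd i (by omega)
      calc ‖(2*z : ℂ)‖ * ‖p (↑i+1) - p ↑i‖ ≤ 2 * ‖p (↑i+1) - p ↑i‖ := by
            apply mul_le_mul_of_nonneg_right hz1 (norm_nonneg _)
        _ < δ := by linarith
    · exact mem_ball_zero_iff.2 (by norm_num)
    · exact mem_ball_zero_iff.2 (by norm_num)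
  · show p _ + ((2:ℂ)*0) • _ = x
    have h0 : u 0 = 0 := by
      apply Subtype.ext
      rw [huval 0 (by omega)]
      simp
    simp only [mul_zero, zero_smul, add_zero, hp]
    rw [show ((0 : Fin (k+1)) : ℕ) = 0 from rfl, h0]
    exact γ.source
  · show p _ + ((2:ℂ)*(1/2)) • (p _ - p _) = y
    have : ((2:ℂ)*(1/2)) = 1 := by norm_num
    rw [this, one_smul]
    have hlast : (Fin.last k : ℕ) = k := rfl
    have h1 : u (k+1) = 1 := by
      apply Subtype.ext
      rw [huval (k+1) (by omega)]
      rw [div_self hmpos.ne']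
      rfl
    simp only [hlast, hp]
    have : p k + (p (k+1) - p k) = p (k+1) := by abel
    rw [this]
    show γ (u (k+1)) = y
    rw [h1]
    exact γ.target
  · intro i
    show p _ + ((2:ℂ)*(1/2)) • (p _ - p _) = p _ + ((2:ℂ)*0) • (p _ - p _)
    have h2 : ((2:ℂ)*(1/2)) = 1 := by norm_num
    rw [h2, one_smul, mul_zero, zero_smul, add_zero]
    have e1 : (i.castSucc : ℕ) = (i : ℕ) := rfl
    have e2 : (i.succ : ℕ) = (i : ℕ) + 1 := rfl
    rw [e1, e2]
    abel

section Bounds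
variable {E : Type*} [NormedAddCommGroup E] [NormedSpace ℂ E]

lemma chainSet_nonneg (D : Set E) (x y : E) (t : ℝ)
    (ht : t ∈ { t : ℝ | ∃ (k : ℕ) (φ : Fin (k + 1) → ℂ → E) (a b : Fin (k + 1) → ℂ),
      (∀ i, DifferentiableOn ℂ (φ i) (Metric.ball (0 : ℂ) 1) ∧
        (φ i) '' (Metric.ball (0 : ℂ) 1) ⊆ D ∧
        a i ∈ Metric.ball (0 : ℂ) 1 ∧ b i ∈ Metric.ball (0 : ℂ) 1) ∧
      φ 0 (a 0) = x ∧ φ (Fin.last k) (b (Fin.last k)) = y ∧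
      (∀ i : Fin k, φ i.castSucc (b i.castSucc) = φ i.succ (a i.succ)) ∧
      t = ∑ i, poincareDist (a i) (b i) }) : 0 ≤ t := by
  obtain ⟨k, φ, a, b, hall, -, -, -, rfl⟩ := ht
  apply Finset.sum_nonneg
  intro i _
  have ha := mem_ball_iff_abs.1 (hall i).2.2.1
  have hb := mem_ball_iff_abs.1 (hall i).2.2.2
  have := artanh_nonneg (norm_nonneg (mob (a i) (b i))) (abs_mob_lt_one ha hb)
  unfold poincareDist
  show 0 ≤ 2 * artanh (‖mob (a i) (b i)‖)
  linarith

lemma kobayashi_nonneg (D : Set E) (hDopen : IsOpen D) (hDconn : IsConnected D)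
    (x y : E) (hx : x ∈ D) (hy : y ∈ D) : 0 ≤ kobayashiDist D x y := by
  apply le_csInf (chain_nonempty D hDopen hDconn x y hx hy)
  exact fun t ht => chainSet_nonneg D x y t ht

end Bounds

section EB
variable {n : ℕ}
local notation "En" => EuclideanSpace ℂ (Fin n)

lemma bound_core (D : Set En) (hDopen : IsOpen D) (hDconn : IsConnected D)
    (f : En → En) (hf : DifferentiableOn ℂ f D) (hfb : f '' D ⊆ ball 0 1)
    (x y : En) (hx : x ∈ D) (hy : y ∈ D) (v : En) (hv : ‖v‖ < 1)
    (hcase : (f x = 0 ∧ f y = v) ∨ (f x = v ∧ f y = 0)) :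
    ‖v‖ ≤ Real.tanh (kobayashiDist D x y / 2) := by
  have hK0 : 0 ≤ kobayashiDist D x y := kobayashi_nonneg D hDopen hDconn x y hx hy
  rcases eq_or_ne v 0 with rfl | hvne
  · simp only [norm_zero]
    calc (0:ℝ) = Real.tanh 0 := Real.tanh_zero.symm
      _ ≤ Real.tanh (kobayashiDist D x y / 2) := tanh_mono (by linarith)
  · set u : En := (‖v‖ : ℂ)⁻¹ • v with hu
    set F : En → ℂ := fun z => (inner ℂ u (f z) : ℂ) with hF
    have hvpos : (0:ℝ) < ‖v‖ := norm_pos_iff.2 hvne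
    have hunorm : ‖u‖ = 1 := by
      rw [hu, norm_smul]
      rw [norm_inv]
      have e : ‖((‖v‖ : ℝ) : ℂ)‖ = ‖v‖ := by
        rw [Complex.norm_real, Real.norm_eq_abs, abs_of_pos hvpos]
      rw [e, inv_mul_cancel₀ hvpos.ne']
    have hFdiff : DifferentiableOn ℂ F D := by
      apply Differentiable.comp_differentiableOn (innerSL ℂ u).differentiable hf
    have hFm : ∀ z ∈ D, ‖F z‖ < 1 := by
      intro z hz
      have h1 : ‖(inner ℂ u (f z) : ℂ)‖ ≤ ‖u‖ * ‖f z‖ := norm_inner_le_norm u (f z)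
      have h2 : ‖f z‖ < 1 := mem_ball_zero_iff.1 (hfb ⟨z, hz, rfl⟩)
      rw [hunorm, one_mul] at h1
      exact lt_of_le_of_lt h1 h2
    have hFv : (inner ℂ u v : ℂ) = (‖v‖ : ℂ) := by
      rw [hu, inner_smul_left]
      rw [inner_self_eq_norm_sq_to_K]
      have : (starRingEnd ℂ) ((‖v‖ : ℂ)⁻¹) = (‖v‖ : ℂ)⁻¹ := by
        rw [← Complex.ofReal_inv, Complex.conj_ofReal]
      rw [this]
      have hne : ((‖v‖ : ℝ) : ℂ) ≠ 0 := by exact_mod_cast hvpos.ne'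
      field_simp
      rfl
    have m1 : ∀ w : ℂ, ‖mob 0 w‖ = ‖w‖ := by intro w; simp [mob]
    have m2 : ∀ w : ℂ, ‖mob w 0‖ = ‖w‖ := by intro w; simp [mob]
    have hmob : ‖mob (F x) (F y)‖ = ‖v‖ := by
      rcases hcase with ⟨h1, h2⟩ | ⟨h1, h2⟩
      · have e1 : F x = 0 := by rw [hF]; simp only; rw [h1, inner_zero_right]
        have e2 : F y = (‖v‖ : ℂ) := by rw [hF]; simp only; rw [h2]; exact hFv
        rw [e1, e2, m1, Complex.norm_real, Real.norm_eq_abs, abs_of_pos hvpos]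
      · have e1 : F x = (‖v‖ : ℂ) := by rw [hF]; simp only; rw [h1]; exact hFv
        have e2 : F y = 0 := by rw [hF]; simp only; rw [h2, inner_zero_right]
        rw [e1, e2, m2, Complex.norm_real, Real.norm_eq_abs, abs_of_pos hvpos]
    have hle : 2 * artanh ‖v‖ ≤ kobayashiDist D x y := by
      rw [← hmob]
      apply le_csInf (chain_nonempty D hDopen hDconn x y hx hy)
      intro t ht
      exact contraction D F hFdiff hFm x y hx hy t ht
    calc ‖v‖ = Real.tanh (artanh ‖v‖) := (tanh_artanh (norm_nonneg v) hv).symm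
      _ ≤ Real.tanh (kobayashiDist D x y / 2) := tanh_mono (by linarith)
end EB

section SQ
variable {n : ℕ}
local notation "En" => EuclideanSpace ℂ (Fin n)

def sqSet (D : Set En) (p : En) : Set ℝ :=
  { r : ℝ | ∃ f : En → En,
    DifferentiableOn ℂ f D ∧ Set.InjOn f D ∧ f '' D ⊆ ball 0 1 ∧ f p = 0 ∧
    0 < r ∧ ball (0 : En) r ⊆ f '' D }

lemma squeezingFn_eq (D : Set En) (p : En) : squeezingFn D p = sSup (sqSet D p) := rfl

lemma sq_le_one [Nontrivial En] {D : Set En} {p : En} {r : ℝ} (hr : r ∈ sqSet D p) :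
    r ≤ 1 := by
  obtain ⟨f, -, -, hfb, -, hrpos, hball⟩ := hr
  by_contra hcon
  push_neg at hcon
  have hpos : (0:ℝ) ≤ (1 + min r 2)/2 := by
    have := lt_min hcon (by norm_num : (1:ℝ) < 2)
    linarith
  obtain ⟨v, hv⟩ := exists_norm_eq En hpos
  have h1 : (1:ℝ) < ‖v‖ := by
    rw [hv]
    have := lt_min hcon (by norm_num : (1:ℝ) < 2)
    linarith
  have h2 : ‖v‖ < r := by
    rw [hv]
    rcases min_cases r 2 with ⟨he, hle⟩ | ⟨he, hle⟩ <;> rw [he] <;> linarith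
  have hm : v ∈ ball (0 : En) r := mem_ball_zero_iff.2 h2
  have := mem_ball_zero_iff.1 (hfb (hball hm))
  linarith

lemma sq_nonempty [Nontrivial En] {D : Set En} (hDopen : IsOpen D)
    (hDbd : Bornology.IsBounded D) {p : En} (hp : p ∈ D) :
    ∃ r, r ∈ sqSet D p := by
  obtain ⟨R, hRpos, hRD⟩ := hDbd.subset_ball_lt 0 0
  set c : ℂ := ((2*R : ℝ) : ℂ)⁻¹ with hc
  have hR2 : (0:ℝ) < 2*R := by linarith
  have hcne : ((2*R : ℝ) : ℂ) ≠ 0 := by exact_mod_cast hR2.ne'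
  set f : En → En := fun z => c • (z - p) with hf
  obtain ⟨ε, hεpos, hεball⟩ := Metric.isOpen_iff.1 hDopen p hp
  have hnorm : ∀ z : En, ‖f z‖ = (2*R)⁻¹ * ‖z - p‖ := by
    intro z
    rw [hf]
    simp only
    rw [norm_smul, hc, norm_inv, Complex.norm_real, Real.norm_eq_abs, abs_of_pos hR2]
  refine ⟨(2*R)⁻¹ * (ε/2), f, ?_, ?_, ?_, ?_, by positivity, ?_⟩
  · apply DifferentiableOn.fun_const_smul
    exact (differentiable_id.sub_const p).differentiableOn
  · intro a _ b _ hab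
    simp only [hf] at hab
    have := smul_right_injective En (by
      rw [hc]
      exact inv_ne_zero hcne) hab
    exact sub_left_injective this
  · rintro _ ⟨z, hz, rfl⟩
    rw [mem_ball_zero_iff, hnorm]
    have h1 : ‖z‖ < R := mem_ball_zero_iff.1 (hRD hz)
    have h2 : ‖p‖ < R := mem_ball_zero_iff.1 (hRD hp)
    have h3 : ‖z - p‖ < 2*R := by
      calc ‖z - p‖ ≤ ‖z‖ + ‖p‖ := norm_sub_le z p
        _ < 2*R := by linarith
    rw [inv_mul_lt_iff₀ hR2, mul_one]
    exact h3
  · simp [hf]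
  · intro w hw
    refine ⟨p + (((2*R:ℝ)) : ℂ) • w, ?_, ?_⟩
    · apply hεball
      rw [mem_ball, dist_eq_norm]
      have : p + ((2*R:ℝ) : ℂ) • w - p = ((2*R:ℝ) : ℂ) • w := by abel
      rw [this, norm_smul, Complex.norm_real, Real.norm_eq_abs, abs_of_pos hR2]
      have hwn : ‖w‖ < (2*R)⁻¹ * (ε/2) := mem_ball_zero_iff.1 hw
      calc 2*R * ‖w‖ < 2*R * ((2*R)⁻¹ * (ε/2)) := by
            apply mul_lt_mul_of_pos_left hwn hR2
        _ = ε/2 := by field_simp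
        _ < ε := by linarith
    · rw [hf]
      simp only
      have : p + ((2*R:ℝ) : ℂ) • w - p = ((2*R:ℝ) : ℂ) • w := by abel
      rw [this, hc, smul_smul, inv_mul_cancel₀ hcne, one_smul]

lemma sq_bddAbove [Nontrivial En] (D : Set En) (p : En) : BddAbove (sqSet D p) :=
  ⟨1, fun _ hr => sq_le_one hr⟩

lemma sSup_sq_nonneg [Nontrivial En] {D : Set En} (hDopen : IsOpen D)
    (hDbd : Bornology.IsBounded D) {p : En} (hp : p ∈ D) : 0 ≤ sSup (sqSet D p) := by
  obtain ⟨r, hr⟩ := sq_nonempty hDopen hDbd hp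
  have hrpos : 0 < r := hr.choose_spec.2.2.2.2.1
  have := le_csSup (sq_bddAbove D p) hr
  linarith

lemma key [Nontrivial En] {D : Set En} (hDopen : IsOpen D)
    (hDbd : Bornology.IsBounded D) {x y : En} (hx : x ∈ D) (hy : y ∈ D)
    (T : ℝ) (hT0 : 0 ≤ T)
    (hbound : ∀ f : En → En, DifferentiableOn ℂ f D → f '' D ⊆ ball 0 1 → f x = 0 →
      ‖f y‖ ≤ T) :
    sSup (sqSet D x) ≤ sSup (sqSet D y) + 2 * T := by
  have hy0 : 0 ≤ sSup (sqSet D y) := sSup_sq_nonneg hDopen hDbd hy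
  apply Real.sSup_le _ (by linarith)
  rintro r ⟨f, hfd, hfi, hfb, hfx, hrpos, hrball⟩
  have hr1 : r ≤ 1 := sq_le_one ⟨f, hfd, hfi, hfb, hfx, hrpos, hrball⟩
  set c : En := f y with hc
  have hcT : ‖c‖ ≤ T := hbound f hfd hfb hfx
  rcases le_or_gt r (2*T) with hcase | hcase
  · linarith
  · -- r > 2T ≥ 2‖c‖
    have hcr : ‖c‖ < r := by linarith [norm_nonneg c]
    set s : ℝ := 1 + ‖c‖ with hs
    have hspos : 0 < s := by have := norm_nonneg c; linarith
    have hsne : ((s : ℝ) : ℂ) ≠ 0 := by exact_mod_cast hspos.ne'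
    set g : En → En := fun z => ((s : ℝ) : ℂ)⁻¹ • (f z - c) with hg
    have hgnorm : ∀ z, ‖g z‖ = s⁻¹ * ‖f z - c‖ := by
      intro z
      rw [hg]
      simp only
      rw [norm_smul, norm_inv, Complex.norm_real, Real.norm_eq_abs, abs_of_pos hspos]
    set r' : ℝ := (r - ‖c‖) / s with hr'
    have hr'pos : 0 < r' := by
      apply div_pos _ hspos
      linarith
    have hmem : r' ∈ sqSet D y := by
      refine ⟨g, ?_, ?_, ?_, ?_, hr'pos, ?_⟩
      · exact DifferentiableOn.fun_const_smul (hfd.sub (differentiableOn_const c)) _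
      · intro a ha b hb hab
        apply hfi ha hb
        simp only [hg] at hab
        have := smul_right_injective En (inv_ne_zero hsne) hab
        exact sub_left_injective this
      · rintro _ ⟨z, hz, rfl⟩
        rw [mem_ball_zero_iff, hgnorm]
        have h1 : ‖f z‖ < 1 := mem_ball_zero_iff.1 (hfb ⟨z, hz, rfl⟩)
        have h2 : ‖f z - c‖ ≤ ‖f z‖ + ‖c‖ := norm_sub_le _ _
        rw [inv_mul_lt_iff₀ hspos, mul_one]
        calc ‖f z - c‖ ≤ ‖f z‖ + ‖c‖ := h2
          _ < s := by rw [hs]; linarith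
      · rw [hg]
        simp only [hc, sub_self, smul_zero]
      · intro w hw
        have hwn : ‖w‖ < r' := mem_ball_zero_iff.1 hw
        have hv : ((s:ℝ) : ℂ) • w + c ∈ ball (0 : En) r := by
          rw [mem_ball_zero_iff]
          calc ‖((s:ℝ) : ℂ) • w + c‖ ≤ ‖((s:ℝ) : ℂ) • w‖ + ‖c‖ := norm_add_le _ _
            _ = s * ‖w‖ + ‖c‖ := by
                rw [norm_smul, Complex.norm_real, Real.norm_eq_abs, abs_of_pos hspos]
            _ < s * r' + ‖c‖ := by
                have := mul_lt_mul_of_pos_left hwn hspos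
                linarith
            _ = r := by
                rw [hr']
                field_simp
                ring
        obtain ⟨z, hz, hfz⟩ := hrball hv
        refine ⟨z, hz, ?_⟩
        rw [hg]
        simp only
        rw [hfz]
        have : ((s:ℝ) : ℂ) • w + c - c = ((s:ℝ) : ℂ) • w := by abel
        rw [this, smul_smul, inv_mul_cancel₀ hsne, one_smul]
    have hle := le_csSup (sq_bddAbove D y) hmem
    -- r ≤ r' + 2T
    have harith : r ≤ r' + 2 * ‖c‖ := by
      rw [hr', hs]
      rw [div_add' _ _ _ hspos.ne', le_div_iff₀ hspos]
      nlinarith [norm_nonneg c]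
    linarith

end SQ

/-- Lipschitz continuity of the squeezing function w.r.t. the metric
`T(x,y) = tanh(K_D(x,y)/2)`: `|s_D(x) - s_D(y)| ≤ 2 tanh(K_D(x,y)/2)`. -/

theorem stmt_5 {n : ℕ} (D : Set (EuclideanSpace ℂ (Fin n)))
    (hDopen : IsOpen D) (hDconn : IsConnected D) (hDbd : Bornology.IsBounded D)
    (x y : EuclideanSpace ℂ (Fin n)) (hx : x ∈ D) (hy : y ∈ D) :
    |squeezingFn D x - squeezingFn D y| ≤ 2 * Real.tanh (kobayashiDist D x y / 2) := by
  have hK0 : 0 ≤ kobayashiDist D x y := kobayashi_nonneg D hDopen hDconn x y hx hy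
  have hT0 : 0 ≤ Real.tanh (kobayashiDist D x y / 2) := by
    have := tanh_mono (by linarith : (0:ℝ) ≤ kobayashiDist D x y / 2)
    rw [Real.tanh_zero] at this
    exact this
  rcases subsingleton_or_nontrivial (EuclideanSpace ℂ (Fin n)) with hsub | hnt
  · have hxy : x = y := Subsingleton.elim x y
    have hz : squeezingFn D x - squeezingFn D y = 0 := by rw [hxy, sub_self]
    rw [hz, abs_zero]
    linarith
  · set T := Real.tanh (kobayashiDist D x y / 2) with hT
    have h1 : squeezingFn D x ≤ squeezingFn D y + 2 * T := by
      rw [squeezingFn_eq, squeezingFn_eq]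
      apply key hDopen hDbd hx hy T hT0
      intro f hfd hfb hfx
      have hfy1 : ‖f y‖ < 1 := mem_ball_zero_iff.1 (hfb ⟨y, hy, rfl⟩)
      exact bound_core D hDopen hDconn f hfd hfb x y hx hy (f y) hfy1 (Or.inl ⟨hfx, rfl⟩)
    have h2 : squeezingFn D y ≤ squeezingFn D x + 2 * T := by
      rw [squeezingFn_eq, squeezingFn_eq]
      apply key hDopen hDbd hy hx T hT0
      intro f hfd hfb hfy
      have hfx1 : ‖f x‖ < 1 := mem_ball_zero_iff.1 (hfb ⟨x, hx, rfl⟩)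
      exact bound_core D hDopen hDconn f hfd hfb x y hx hy (f x) hfx1 (Or.inr ⟨rfl, hfy⟩)
    rw [abs_sub_le_iff]
    constructor <;> linarith
end
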